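/- arXiv:2301.13227 — 3 statements merged into one kernel-verified Lean document; each statement's English description precedes it below -/
import Mathlib

section
/- Let π' : ℂ((t)) → H' be the projection killing the constant term, and for f ∈ ℂ((t)) define T_f ∈ End(H') by T_f(g) = π'(f·g'). Then: (i) the map f ↦ T_f is ℂ-linear and injective; (ii) each T_f is skew-adjoint for the residue pairing restricted to H', i.e. ⟨T_f(g), h⟩ + ⟨g, T_f(h)⟩ = 0 for g,h ∈ H'; and (iii) [T_f, T_h] = T_{f·h' − h·f'} for all f,h ∈ ℂ((t)). In other words, the oscillator representation τ is an injective Lie algebra homomorphism from the Witt algebra of derivations f∂_t of ℂ((t)) into the symplectic algebra sp(H'). -/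
open HahnSeries

/-- Formal derivative on Laurent series: `(D f).coeff n = (n+1) * f.coeff (n+1)`. -/
noncomputable def D (f : LaurentSeries ℂ) : LaurentSeries ℂ where
  coeff := fun n => ((n + 1 : ℤ) : ℂ) * f.coeff (n + 1)
  isPWO_support' := by
    have himg : (Function.support fun n : ℤ => ((n + 1 : ℤ) : ℂ) * f.coeff (n + 1)) ⊆
        (fun n : ℤ => n - 1) '' f.support := by
      intro n hn
      have h : f.coeff (n + 1) ≠ 0 := by
        intro h
        simp [Function.mem_support, h] at hn
      exact ⟨n + 1, h, by ring⟩
    exact (f.isPWO_support.image_of_monotone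
      (fun a b hab => by simpa using sub_le_sub_right hab 1)).mono himg

/-- The residue pairing `⟨f,g⟩ = -Res_{t=0}(f·g')`, i.e. minus the coefficient of
`t⁻¹` in `f * D g`. -/
noncomputable def resPair (f g : LaurentSeries ℂ) : ℂ := -((f * D g).coeff (-1))

/-- `H' ⊂ ℂ((t))`: the subspace of Laurent series with zero constant term. -/
noncomputable def Hprime : Submodule ℂ (LaurentSeries ℂ) where
  carrier := {f | f.coeff 0 = 0}
  zero_mem' := by simp
  add_mem' := by
    intro a b ha hb
    simp only [Set.mem_setOf_eq, HahnSeries.coeff_add] at *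
    simp [ha, hb]
  smul_mem' := by
    intro c f hf
    simp only [Set.mem_setOf_eq, HahnSeries.coeff_smul] at *
    simp [hf]


/-- Euler operator: `(E' f).coeff n = n * f.coeff n`. -/
noncomputable def E' (f : LaurentSeries ℂ) : LaurentSeries ℂ where
  coeff := fun n => (n : ℂ) * f.coeff n
  isPWO_support' := f.isPWO_support.mono (by
    intro n hn
    simp only [Function.mem_support] at hn ⊢
    intro h; simp [h] at hn)

lemma E'_coeff (f : LaurentSeries ℂ) (n : ℤ) : (E' f).coeff n = (n : ℂ) * f.coeff n := rfl

lemma E'_support (f : LaurentSeries ℂ) : (E' f).support ⊆ f.support := by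
  intro n hn
  simp only [HahnSeries.mem_support, E'_coeff] at hn ⊢
  intro h; simp [h] at hn

lemma D_coeff (f : LaurentSeries ℂ) (n : ℤ) :
    (D f).coeff n = ((n + 1 : ℤ) : ℂ) * f.coeff (n + 1) := rfl

lemma D_eq_single_mul (f : LaurentSeries ℂ) :
    D f = (single (-1 : ℤ) (1 : ℂ)) * E' f := by
  ext n
  have h := coeff_single_mul_add (r := (1:ℂ)) (x := E' f) (a := n + 1) (b := (-1:ℤ))
  simp only [add_neg_cancel_right, one_mul] at h
  rw [h]
  rfl

lemma E'_mul (x y : LaurentSeries ℂ) : E' (x * y) = E' x * y + x * E' y := by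
  ext n
  rw [HahnSeries.coeff_add,
    coeff_mul_left' x.isPWO_support (E'_support x),
    coeff_mul_right' y.isPWO_support (E'_support y),
    E'_coeff, HahnSeries.coeff_mul, Finset.mul_sum, ← Finset.sum_add_distrib]
  refine Finset.sum_congr rfl ?_
  rintro ⟨i, j⟩ hij
  rw [Finset.mem_addAntidiagonal] at hij
  have hn : ((n : ℂ)) = (i : ℂ) + (j : ℂ) := by
    rw [← hij.2.2]; push_cast; ring
  rw [E'_coeff, E'_coeff, hn]; ring

lemma D_mul (x y : LaurentSeries ℂ) : D (x * y) = D x * y + x * D y := by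
  rw [D_eq_single_mul, D_eq_single_mul, D_eq_single_mul, E'_mul]; ring

lemma D_res (x : LaurentSeries ℂ) : (D x).coeff (-1) = 0 := by
  rw [D_coeff]; norm_num

lemma D_sub_C (f : LaurentSeries ℂ) (c : ℂ) : D (f - HahnSeries.C c) = D f := by
  ext n
  rw [D_coeff, D_coeff, HahnSeries.coeff_sub]
  rcases eq_or_ne (n + 1) 0 with h | h
  · rw [h]; norm_num
  · rw [HahnSeries.C_apply, coeff_single_of_ne h]; ring

/-- The projection `π' : ℂ((t)) → H'` killing the constant term. -/
noncomputable def proj0 (f : LaurentSeries ℂ) : Hprime :=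
  ⟨f - HahnSeries.C (f.coeff 0), by
    have : (f - HahnSeries.C (f.coeff 0)).coeff (0 : ℤ) = 0 := by
      simp [HahnSeries.coeff_sub, HahnSeries.C_apply, HahnSeries.coeff_single_same]
    exact this⟩


lemma proj0_coe (f : LaurentSeries ℂ) :
    ((proj0 f : Hprime) : LaurentSeries ℂ) = f - HahnSeries.C (f.coeff 0) := rfl

lemma D_proj0 (f : LaurentSeries ℂ) :
    D ((proj0 f : Hprime) : LaurentSeries ℂ) = D f := by
  rw [proj0_coe, D_sub_C]

lemma proj0_sub (x y : LaurentSeries ℂ) : proj0 (x - y) = proj0 x - proj0 y := by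
  apply Subtype.ext
  rw [AddSubgroupClass.coe_sub, proj0_coe, proj0_coe, proj0_coe, HahnSeries.coeff_sub, map_sub]
  ring

/-- The oscillator operator `T_f : H' → H'`, `T_f(g) = π'(f·g')`. -/
noncomputable def T (f : LaurentSeries ℂ) (g : Hprime) : Hprime :=
  proj0 (f * D (g : LaurentSeries ℂ))


lemma T_val (f : LaurentSeries ℂ) (g : Hprime) :
    ((T f g : Hprime) : LaurentSeries ℂ)
      = f * D (g : LaurentSeries ℂ)
        - HahnSeries.C ((f * D (g : LaurentSeries ℂ)).coeff 0) := rfl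

lemma D_T_val (f : LaurentSeries ℂ) (g : Hprime) :
    D ((T f g : Hprime) : LaurentSeries ℂ) = D (f * D (g : LaurentSeries ℂ)) :=
  D_proj0 _

lemma T_T (f h : LaurentSeries ℂ) (k : Hprime) :
    T f (T h k) = proj0 (f * D (h * D (k : LaurentSeries ℂ))) := by
  unfold T
  rw [D_proj0]

lemma D_single_one : D (single (1 : ℤ) (1 : ℂ)) = 1 := by
  ext n
  rcases eq_or_ne n 0 with rfl | h
  · simp [D_coeff, coeff_single, coeff_one]
  · have h1 : n + 1 ≠ 1 := by omega
    simp [D_coeff, coeff_single_of_ne h1, coeff_one, h]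

lemma D_single_two : D (single (2 : ℤ) (1 : ℂ)) = single (1 : ℤ) (2 : ℂ) := by
  ext n
  rcases eq_or_ne n 1 with rfl | h
  · norm_num [D_coeff, coeff_single]
  · have h1 : n + 1 ≠ 2 := by omega
    simp [D_coeff, coeff_single_of_ne h1, coeff_single_of_ne h]

/-- `f ↦ T_f` is ℂ-linear and injective, each `T_f` is skew-adjoint for
the residue pairing on `H'`, and `[T_f, T_h] = T_{f·h' − h·f'}`: the oscillator
representation is an injective Lie algebra map `Witt → sp(H')`. -/
theorem oscillator_representation :
    (∀ (a b : ℂ) (f g : LaurentSeries ℂ) (k : Hprime),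
      T (a • f + b • g) k = a • T f k + b • T g k) ∧
    (∀ f g : LaurentSeries ℂ, T f = T g → f = g) ∧
    (∀ (f : LaurentSeries ℂ) (g h : Hprime),
      resPair (T f g : LaurentSeries ℂ) (h : LaurentSeries ℂ) +
        resPair (g : LaurentSeries ℂ) (T f h : LaurentSeries ℂ) = 0) ∧
    (∀ (f h : LaurentSeries ℂ) (k : Hprime),
      T f (T h k) - T h (T f k) = T (f * D h - h * D f) k) := by
  refine ⟨?_, ?_, ?_, ?_⟩
  · -- linearity
    intro a b f g k
    apply Subtype.ext
    rw [T_val, Submodule.coe_add, SetLike.val_smul, SetLike.val_smul, T_val, T_val]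
    have hmul : (a • f + b • g) * D (k : LaurentSeries ℂ)
        = a • (f * D (k : LaurentSeries ℂ)) + b • (g * D (k : LaurentSeries ℂ)) := by
      rw [← single_zero_mul_eq_smul, ← single_zero_mul_eq_smul, ← single_zero_mul_eq_smul,
        ← single_zero_mul_eq_smul]
      ring
    rw [hmul]
    ext n
    simp only [HahnSeries.coeff_sub, HahnSeries.coeff_add, HahnSeries.coeff_smul,
      HahnSeries.C_apply, coeff_single, smul_eq_mul]
    split_ifs <;> ring
  · -- injectivity
    intro f g hfg
    have hk1 : (single (1 : ℤ) (1 : ℂ)).coeff (0 : ℤ) = 0 :=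
      coeff_single_of_ne (by norm_num)
    have hk2 : (single (2 : ℤ) (1 : ℂ)).coeff (0 : ℤ) = 0 :=
      coeff_single_of_ne (by norm_num)
    have h1 : T f ⟨single 1 1, hk1⟩ = T g ⟨single 1 1, hk1⟩ := by rw [hfg]
    have h2 : T f ⟨single 2 1, hk2⟩ = T g ⟨single 2 1, hk2⟩ := by rw [hfg]
    have e1 : f - HahnSeries.C (f.coeff 0) = g - HahnSeries.C (g.coeff 0) := by
      have := congrArg Subtype.val h1
      rw [T_val, T_val] at this
      simpa [D_single_one] using this
    have e2 : f * single (1:ℤ) (2:ℂ) - HahnSeries.C ((f * single (1:ℤ) (2:ℂ)).coeff 0)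
        = g * single (1:ℤ) (2:ℂ) - HahnSeries.C ((g * single (1:ℤ) (2:ℂ)).coeff 0) := by
      have := congrArg Subtype.val h2
      rw [T_val, T_val] at this
      simpa [D_single_two] using this
    have hne : ∀ n : ℤ, n ≠ 0 → f.coeff n = g.coeff n := by
      intro n hn
      have := congrArg (fun x : LaurentSeries ℂ => x.coeff n) e1
      simpa [HahnSeries.coeff_sub, HahnSeries.C_apply, coeff_single_of_ne hn] using this
    have h0 : f.coeff 0 = g.coeff 0 := by
      have := congrArg (fun x : LaurentSeries ℂ => x.coeff 1) e2
      have hfc : (f * single (1:ℤ) (2:ℂ)).coeff (1:ℤ) = f.coeff 0 * 2 := by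
        have := coeff_mul_single_add (x := f) (r := (2:ℂ)) (a := (0:ℤ)) (b := (1:ℤ))
        simpa using this
      have hgc : (g * single (1:ℤ) (2:ℂ)).coeff (1:ℤ) = g.coeff 0 * 2 := by
        have := coeff_mul_single_add (x := g) (r := (2:ℂ)) (a := (0:ℤ)) (b := (1:ℤ))
        simpa using this
      simp only [HahnSeries.coeff_sub, HahnSeries.C_apply,
        coeff_single_of_ne (one_ne_zero), hfc, hgc, sub_zero] at this
      have : f.coeff 0 * 2 = g.coeff 0 * 2 := this
      linear_combination this / 2
    ext n
    rcases eq_or_ne n 0 with rfl | hn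
    · exact h0
    · exact hne n hn
  · -- skew-adjointness
    intro f g h
    unfold resPair
    rw [T_val, D_T_val, sub_mul, HahnSeries.coeff_sub]
    have h1 : (HahnSeries.C ((f * D (g : LaurentSeries ℂ)).coeff 0)
        * D (h : LaurentSeries ℂ)).coeff (-1 : ℤ) = 0 := by
      rw [HahnSeries.C_apply, coeff_single_zero_mul, D_res, mul_zero]
    rw [h1, sub_zero]
    have h2 : f * D (g : LaurentSeries ℂ) * D (h : LaurentSeries ℂ)
          + (g : LaurentSeries ℂ) * D (f * D (h : LaurentSeries ℂ))
        = D (f * ((g : LaurentSeries ℂ) * D (h : LaurentSeries ℂ))) := by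
      simp only [D_mul]; ring
    have h3 : (f * D (g : LaurentSeries ℂ) * D (h : LaurentSeries ℂ)).coeff (-1)
        + ((g : LaurentSeries ℂ) * D (f * D (h : LaurentSeries ℂ))).coeff (-1) = 0 := by
      rw [← HahnSeries.coeff_add, h2, D_res]
    linear_combination -h3
  · -- commutator
    intro f h k
    rw [T_T, T_T, ← proj0_sub]
    unfold T
    congr 1
    simp only [D_mul]
    ring
end

section
/- Let L' ⊆ ℂ[t,t⁻¹] be the space of Laurent polynomials with zero constant term, and let 𝔰 ⊆ End(L') be the ℂ-linear span of the operators T_{f,g}, for f,g ∈ L', where T_{f,g}(k) = ⟨f,k⟩·g + ⟨g,k⟩·f. Then 𝔰 is closed under the commutator bracket and is perfect: [𝔰, 𝔰] = 𝔰, i.e. every element of 𝔰 is a ℂ-linear combination of commutators of elements of 𝔰. (This is the identity S²(H'_f) = [S²(H'_f), S²(H'_f)] used to prove H¹(sp(H'), ℂ) = 0.) -/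
open HahnSeries

set_option maxHeartbeats 1000000
set_option synthInstance.maxHeartbeats 400000

/-- `L' ⊂ ℂ((t))`: Laurent polynomials with zero constant term, viewed inside the
Laurent series. -/
noncomputable def Lprime : Submodule ℂ (LaurentSeries ℂ) where
  carrier := {f | f.coeff 0 = 0 ∧ f.support.Finite}
  zero_mem' := by
    refine ⟨by simp, ?_⟩
    simp [HahnSeries.support_zero]
  add_mem' := by
    rintro a b ⟨ha0, haf⟩ ⟨hb0, hbf⟩
    refine ⟨by simp [HahnSeries.coeff_add, ha0, hb0], ?_⟩
    refine Set.Finite.subset (haf.union hbf) ?_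
    intro n hn
    simp only [HahnSeries.support, Function.mem_support, HahnSeries.coeff_add,
      Set.mem_union] at hn ⊢
    by_contra h
    push_neg at h
    simp [h.1, h.2] at hn
  smul_mem' := by
    rintro c f ⟨hf0, hff⟩
    refine ⟨by simp [HahnSeries.coeff_smul, hf0], ?_⟩
    refine Set.Finite.subset hff ?_
    intro n hn
    simp only [HahnSeries.support, Function.mem_support, HahnSeries.coeff_smul] at hn ⊢
    intro h
    simp [h] at hn

/-- The operator `T_{f,g} : L' → L'`, `T_{f,g}(k) = ⟨f,k⟩g + ⟨g,k⟩f` (a ℂ-linear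
endomorphism of `L'`). -/
noncomputable def TL (f g : Lprime) (k : Lprime) : Lprime :=
  resPair (f : LaurentSeries ℂ) (k : LaurentSeries ℂ) • g +
    resPair (g : LaurentSeries ℂ) (k : LaurentSeries ℂ) • f

/-- The span `𝔰 ≅ S²(H'_f)` of the operators `T_{f,g}` inside `End(L')`. -/
noncomputable def sFrak : Submodule ℂ (Lprime → Lprime) :=
  Submodule.span ℂ {A : Lprime → Lprime | ∃ f g : Lprime, A = TL f g}

section Aux

lemma D_add (f g : LaurentSeries ℂ) : D (f + g) = D f + D g := by
  ext n; simp [D_coeff, HahnSeries.coeff_add]; ring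

lemma D_smul (c : ℂ) (f : LaurentSeries ℂ) : D (c • f) = c • D f := by
  ext n; simp [D_coeff, HahnSeries.coeff_smul]; ring

lemma D_zero : D (0 : LaurentSeries ℂ) = 0 := by
  ext n; simp [D_coeff]

lemma smul_mul_laurent (c : ℂ) (x y : LaurentSeries ℂ) : (c • x) * y = c • (x * y) := by
  rw [← HahnSeries.single_zero_mul_eq_smul, ← HahnSeries.single_zero_mul_eq_smul, mul_assoc]

lemma mul_smul_laurent (c : ℂ) (x y : LaurentSeries ℂ) : x * (c • y) = c • (x * y) := by
  rw [mul_comm, smul_mul_laurent, mul_comm]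

lemma resPair_add_left (f f' g : LaurentSeries ℂ) :
    resPair (f + f') g = resPair f g + resPair f' g := by
  simp [resPair, add_mul, HahnSeries.coeff_add]; ring

lemma resPair_smul_left (c : ℂ) (f g : LaurentSeries ℂ) :
    resPair (c • f) g = c * resPair f g := by
  rw [resPair, resPair, smul_mul_laurent, HahnSeries.coeff_smul, smul_eq_mul]; ring

lemma resPair_add_right (f g g' : LaurentSeries ℂ) :
    resPair f (g + g') = resPair f g + resPair f g' := by
  simp [resPair, D_add, mul_add, HahnSeries.coeff_add]; ring

lemma resPair_smul_right (c : ℂ) (f g : LaurentSeries ℂ) :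
    resPair f (c • g) = c * resPair f g := by
  rw [resPair, resPair, D_smul, mul_smul_laurent, HahnSeries.coeff_smul, smul_eq_mul]; ring

lemma resPair_zero_left (g : LaurentSeries ℂ) : resPair 0 g = 0 := by
  simp [resPair]

lemma resPair_zero_right (f : LaurentSeries ℂ) : resPair f 0 = 0 := by
  simp [resPair, D_zero]

lemma D_single (b : ℤ) (y : ℂ) : D (HahnSeries.single b y) = HahnSeries.single (b - 1) ((b : ℂ) * y) := by
  ext n
  rw [D_coeff, HahnSeries.coeff_single, HahnSeries.coeff_single]
  by_cases h : n = b - 1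
  · subst h; simp [sub_add_cancel]
  · have : ¬ (n + 1 = b) := fun hh => h (by omega)
    simp [h, this]

lemma resPair_single (a b : ℤ) (x y : ℂ) :
    resPair (HahnSeries.single a x) (HahnSeries.single b y) =
      if a + b = 0 then (a : ℂ) * (x * y) else 0 := by
  rw [resPair, D_single, HahnSeries.single_mul_single, HahnSeries.coeff_single]
  by_cases h : a + b = 0
  · have hb : (b : ℂ) = -(a : ℂ) := by
      have : b = -a := by omega
      simp [this]
    have : (-1 : ℤ) = a + (b - 1) := by omega
    simp [h, this, hb]; ring
  · have : ¬ ((-1 : ℤ) = a + (b - 1)) := by omega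
    simp [h, this]

end Aux
lemma resPair_antisymm {f g : LaurentSeries ℂ} (hf : f.coeff 0 = 0) (hg : g.coeff 0 = 0) :
    resPair g f = - resPair f g := by
  have key : (g * D f).coeff (-1) = - (f * D g).coeff (-1) := by
    rw [HahnSeries.coeff_mul, HahnSeries.coeff_mul, ← Finset.sum_neg_distrib]
    refine Finset.sum_nbij' (fun ij => (ij.2 + 1, ij.1 - 1)) (fun ij => (ij.2 + 1, ij.1 - 1))
      ?_ ?_ ?_ ?_ ?_
    · rintro ⟨i, j⟩ hij
      rw [Finset.mem_addAntidiagonal] at hij ⊢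
      obtain ⟨h1, h2, h3⟩ := hij
      simp only [HahnSeries.mem_support] at h1 h2 ⊢
      have hfne : f.coeff (j + 1) ≠ 0 := by
        intro h; apply h2; rw [D_coeff, h, mul_zero]
      have hine : i ≠ 0 := by intro h; rw [h] at h1; exact h1 hg
      refine ⟨hfne, ?_, by omega⟩
      rw [D_coeff]
      have : i - 1 + 1 = i := by omega
      rw [this]
      intro h
      rcases mul_eq_zero.mp h with h | h
      · exact hine (by exact_mod_cast h)
      · exact h1 h
    · rintro ⟨i, j⟩ hij
      rw [Finset.mem_addAntidiagonal] at hij ⊢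
      obtain ⟨h1, h2, h3⟩ := hij
      simp only [HahnSeries.mem_support] at h1 h2 ⊢
      have hgne : g.coeff (j + 1) ≠ 0 := by
        intro h; apply h2; rw [D_coeff, h, mul_zero]
      have hine : i ≠ 0 := by intro h; rw [h] at h1; exact h1 hf
      refine ⟨hgne, ?_, by omega⟩
      rw [D_coeff]
      have : i - 1 + 1 = i := by omega
      rw [this]
      intro h
      rcases mul_eq_zero.mp h with h | h
      · exact hine (by exact_mod_cast h)
      · exact h1 h
    · rintro ⟨i, j⟩ hij; simp only [Prod.mk.injEq]; constructor <;> omega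
    · rintro ⟨i, j⟩ hij; simp only [Prod.mk.injEq]; constructor <;> omega
    · rintro ⟨i, j⟩ hij
      rw [Finset.mem_addAntidiagonal] at hij
      obtain ⟨h1, h2, h3⟩ := hij
      simp only [D_coeff]
      have e0 : i - 1 + 1 = i := by omega
      rw [e0]
      have e2 : (j : ℂ) = -1 - (i : ℂ) := by
        have : (j : ℤ) = -1 - i := by omega
        exact_mod_cast this
      push_cast
      rw [e2]
      ring
  rw [resPair, resPair, key, neg_neg]
noncomputable def monoL (i : ℤ) : Lprime :=
  if h : i = 0 then 0 else
    ⟨HahnSeries.single i (1 : ℂ), by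
      refine ⟨?_, (Set.finite_singleton i).subset HahnSeries.support_single_subset⟩
      rw [HahnSeries.coeff_single]
      simp [Ne.symm h]⟩

lemma monoL_coe {i : ℤ} (h : i ≠ 0) : (monoL i : LaurentSeries ℂ) = HahnSeries.single i 1 := by
  simp [monoL, h]

lemma resPair_monoL {a b : ℤ} (ha : a ≠ 0) (hb : b ≠ 0) :
    resPair (monoL a : LaurentSeries ℂ) (monoL b : LaurentSeries ℂ) =
      if a + b = 0 then (a : ℂ) else 0 := by
  rw [monoL_coe ha, monoL_coe hb, resPair_single]
  by_cases h : a + b = 0 <;> simp [h]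

lemma TL_symm (f g : Lprime) : TL f g = TL g f := by
  funext k; exact add_comm _ _

lemma TL_add_left (f f' g : Lprime) : TL (f + f') g = TL f g + TL f' g := by
  funext k
  show TL (f + f') g k = TL f g k + TL f' g k
  unfold TL
  rw [Submodule.coe_add, resPair_add_left, add_smul, smul_add]
  abel

lemma TL_smul_left (c : ℂ) (f g : Lprime) : TL (c • f) g = c • TL f g := by
  funext k
  show TL (c • f) g k = c • TL f g k
  unfold TL
  rw [Submodule.coe_smul, resPair_smul_left, mul_smul, smul_add, smul_comm (resPair _ _) c f]

noncomputable def TLbil : Lprime →ₗ[ℂ] Lprime →ₗ[ℂ] (Lprime → Lprime) :=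
  LinearMap.mk₂ ℂ TL TL_add_left TL_smul_left
    (fun f g g' => by rw [TL_symm, TL_add_left, TL_symm g f, TL_symm g' f])
    (fun c f g => by rw [TL_symm, TL_smul_left, TL_symm g f])

lemma Lprime_decomp (f : Lprime) :
    f = ∑ i ∈ f.2.2.toFinset, (f : LaurentSeries ℂ).coeff i • monoL i := by
  apply Subtype.ext
  rw [Submodule.coe_sum]
  ext n
  rw [show (∑ i ∈ f.2.2.toFinset,
        ((((f : LaurentSeries ℂ).coeff i • monoL i : Lprime)) : LaurentSeries ℂ)).coeff n =
      ∑ i ∈ f.2.2.toFinset,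
        (((f : LaurentSeries ℂ).coeff i • monoL i : Lprime) : LaurentSeries ℂ).coeff n from
    map_sum (HahnSeries.coeff.addMonoidHom n) _ _]
  have hcongr : ∀ i ∈ f.2.2.toFinset,
      (((f : LaurentSeries ℂ).coeff i • monoL i : Lprime) : LaurentSeries ℂ).coeff n =
        if n = i then (f : LaurentSeries ℂ).coeff i else 0 := by
    intro i hi
    have hmem : (f : LaurentSeries ℂ).coeff i ≠ 0 := by
      simpa [Set.Finite.mem_toFinset, HahnSeries.mem_support] using hi
    have hi' : i ≠ 0 := fun h0 => hmem (h0 ▸ f.2.1)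
    rw [Submodule.coe_smul, monoL_coe hi', HahnSeries.coeff_smul, HahnSeries.coeff_single]
    by_cases h : n = i <;> simp [h]
  rw [Finset.sum_congr rfl hcongr, Finset.sum_ite_eq]
  by_cases h : n ∈ f.2.2.toFinset
  · simp [h]
  · have : (f : LaurentSeries ℂ).coeff n = 0 := by
      by_contra hne
      exact h (by simpa [Set.Finite.mem_toFinset, HahnSeries.mem_support] using hne)
    simp [h, this]
lemma TL_apply_add (f g x y : Lprime) : TL f g (x + y) = TL f g x + TL f g y := by
  unfold TL
  rw [Submodule.coe_add, resPair_add_right, resPair_add_right, add_smul, add_smul]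
  abel

lemma TL_apply_smul (f g : Lprime) (c : ℂ) (x : Lprime) : TL f g (c • x) = c • TL f g x := by
  unfold TL
  rw [Submodule.coe_smul, resPair_smul_right, resPair_smul_right, mul_smul, mul_smul, smul_add]

lemma sFrak_linear {A : Lprime → Lprime} (hA : A ∈ sFrak) :
    (∀ x y, A (x + y) = A x + A y) ∧ (∀ (c : ℂ) (x : Lprime), A (c • x) = c • A x) := by
  induction hA using Submodule.span_induction with
  | mem A hA =>
    obtain ⟨f, g, rfl⟩ := hA
    exact ⟨TL_apply_add f g, fun c x => TL_apply_smul f g c x⟩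
  | zero => exact ⟨fun _ _ => by simp, fun _ _ => by simp⟩
  | add A B _ _ ihA ihB =>
    exact ⟨fun x y => by simp only [Pi.add_apply, ihA.1, ihB.1]; abel,
      fun c x => by simp only [Pi.add_apply, ihA.2, ihB.2, smul_add]⟩
  | smul c A _ ihA =>
    exact ⟨fun x y => by simp only [Pi.smul_apply, ihA.1, smul_add],
      fun d x => by simp only [Pi.smul_apply, ihA.2]; rw [smul_comm]⟩

lemma sFrak_map_zero {A : Lprime → Lprime} (hA : A ∈ sFrak) : A 0 = 0 := by
  have := (sFrak_linear hA).2 0 0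
  simpa using this

lemma resPair_antisymm' (f g : Lprime) :
    resPair (g : LaurentSeries ℂ) (f : LaurentSeries ℂ)
      = - resPair (f : LaurentSeries ℂ) (g : LaurentSeries ℂ) :=
  resPair_antisymm f.2.1 g.2.1

/-- The key commutator formula. -/
lemma TL_comm (f g h k : Lprime) :
    (fun m => TL f g (TL h k m) - TL h k (TL f g m)) =
      resPair (f : LaurentSeries ℂ) (k : LaurentSeries ℂ) • TL g h +
      resPair (g : LaurentSeries ℂ) (k : LaurentSeries ℂ) • TL f h +
      resPair (f : LaurentSeries ℂ) (h : LaurentSeries ℂ) • TL g k +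
      resPair (g : LaurentSeries ℂ) (h : LaurentSeries ℂ) • TL f k := by
  funext m
  simp only [Pi.add_apply, Pi.smul_apply]
  unfold TL
  simp only [Submodule.coe_add, Submodule.coe_smul, resPair_add_right, resPair_smul_right]
  rw [resPair_antisymm' g h, resPair_antisymm' f h, resPair_antisymm' g k,
    resPair_antisymm' f k]
  module
lemma TL_mem (f g : Lprime) : TL f g ∈ sFrak := Submodule.subset_span ⟨f, g, rfl⟩

lemma TL_apply_zero (f g : Lprime) : TL f g 0 = 0 := by
  simpa using TL_apply_smul f g 0 0

lemma comm_mem_sFrak {A B : Lprime → Lprime} (hA : A ∈ sFrak) (hB : B ∈ sFrak) :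
    (fun k => A (B k) - B (A k)) ∈ sFrak := by
  induction hA using Submodule.span_induction with
  | mem A hA =>
    obtain ⟨f, g, rfl⟩ := hA
    induction hB using Submodule.span_induction with
    | mem B hB =>
      obtain ⟨h, k, rfl⟩ := hB
      rw [TL_comm]
      exact add_mem (add_mem (add_mem (Submodule.smul_mem _ _ (TL_mem _ _))
        (Submodule.smul_mem _ _ (TL_mem _ _))) (Submodule.smul_mem _ _ (TL_mem _ _)))
        (Submodule.smul_mem _ _ (TL_mem _ _))
    | zero =>
      have : (fun k => TL f g ((0 : Lprime → Lprime) k) - (0 : Lprime → Lprime) (TL f g k))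
          = (0 : Lprime → Lprime) := by
        funext k; simp only [TL_apply_zero, Pi.zero_apply]; module
      rw [this]; exact Submodule.zero_mem _
    | add B C hBm hCm ihB ihC =>
      have : (fun k => TL f g ((B + C) k) - (B + C) (TL f g k)) =
          (fun k => TL f g (B k) - B (TL f g k)) + (fun k => TL f g (C k) - C (TL f g k)) := by
        funext k
        simp only [Pi.add_apply, TL_apply_add]
        abel
      rw [this]; exact add_mem ihB ihC
    | smul c B hBm ihB =>
      have : (fun k => TL f g ((c • B) k) - (c • B) (TL f g k)) =
          c • (fun k => TL f g (B k) - B (TL f g k)) := by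
        funext k
        simp only [Pi.smul_apply, TL_apply_smul]
        module
      rw [this]; exact Submodule.smul_mem _ _ ihB
  | zero =>
    have : (fun k => (0 : Lprime → Lprime) (B k) - B ((0 : Lprime → Lprime) k))
        = (0 : Lprime → Lprime) := by
      funext k; simp only [sFrak_map_zero hB, Pi.zero_apply]; module
    rw [this]; exact Submodule.zero_mem _
  | add A A' hAm hA'm ihA ihA' =>
    have : (fun k => (A + A') (B k) - B ((A + A') k)) =
        (fun k => A (B k) - B (A k)) + (fun k => A' (B k) - B (A' k)) := by
      funext k
      simp only [Pi.add_apply, (sFrak_linear hB).1]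
      abel
    rw [this]; exact add_mem ihA ihA'
  | smul c A hAm ihA =>
    have : (fun k => (c • A) (B k) - B ((c • A) k)) =
        c • (fun k => A (B k) - B (A k)) := by
      funext k
      simp only [Pi.smul_apply, (sFrak_linear hB).2]
      module
    rw [this]; exact Submodule.smul_mem _ _ ihA

noncomputable def Cspan : Submodule ℂ (Lprime → Lprime) :=
  Submodule.span ℂ {X : Lprime → Lprime | ∃ A ∈ sFrak, ∃ B ∈ sFrak,
    X = fun k => A (B k) - B (A k)}

lemma TL_monoL_mem_C {a b : ℤ} (ha : a ≠ 0) (hb : b ≠ 0) :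
    TL (monoL a) (monoL b) ∈ Cspan := by
  by_cases hab : a + b = 0
  · have hb' : b = -a := by omega
    subst hb'
    have hE : ∀ x c : ℤ, x ≠ 0 → c ≠ 0 → c ≠ x →
        ((c : ℂ) • TL (monoL x) (monoL (-x)) + (x : ℂ) • TL (monoL c) (monoL (-c))) ∈ Cspan := by
      intro x c hx hc hcx
      have h1 : resPair (monoL x : LaurentSeries ℂ) (monoL (-c) : LaurentSeries ℂ) = 0 := by
        rw [resPair_monoL hx (by omega), if_neg (by omega)]
      have h2 : resPair (monoL c : LaurentSeries ℂ) (monoL (-c) : LaurentSeries ℂ) = (c : ℂ) := by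
        rw [resPair_monoL hc (by omega), if_pos (by omega)]
      have h3 : resPair (monoL x : LaurentSeries ℂ) (monoL (-x) : LaurentSeries ℂ) = (x : ℂ) := by
        rw [resPair_monoL hx (by omega), if_pos (by omega)]
      have h4 : resPair (monoL c : LaurentSeries ℂ) (monoL (-x) : LaurentSeries ℂ) = 0 := by
        rw [resPair_monoL hc (by omega), if_neg (by omega)]
      have hcomm := TL_comm (monoL x) (monoL c) (monoL (-x)) (monoL (-c))
      rw [h1, h2, h3, h4, zero_smul, zero_smul, zero_add, add_zero] at hcomm
      rw [← hcomm]
      exact Submodule.subset_span ⟨_, TL_mem (monoL x) (monoL c), _,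
        TL_mem (monoL (-x)) (monoL (-c)), rfl⟩
    have E1 := hE a (2 * a) ha (by omega) (by omega)
    have E2 := hE a (3 * a) ha (by omega) (by omega)
    have E3 := hE (2 * a) (3 * a) (by omega) (by omega) (by omega)
    have hcomb : ((12 * a : ℤ) : ℂ) • TL (monoL a) (monoL (-a)) =
        (3 : ℂ) • (((2 * a : ℤ) : ℂ) • TL (monoL a) (monoL (-a)) +
            (a : ℂ) • TL (monoL (2 * a)) (monoL (-(2 * a)))) +
          (2 : ℂ) • (((3 * a : ℤ) : ℂ) • TL (monoL a) (monoL (-a)) +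
            (a : ℂ) • TL (monoL (3 * a)) (monoL (-(3 * a)))) +
          (-1 : ℂ) • (((3 * a : ℤ) : ℂ) • TL (monoL (2 * a)) (monoL (-(2 * a))) +
            ((2 * a : ℤ) : ℂ) • TL (monoL (3 * a)) (monoL (-(3 * a)))) := by
      funext m
      simp only [Pi.smul_apply, Pi.add_apply]
      push_cast
      module
    have hmem : ((12 * a : ℤ) : ℂ) • TL (monoL a) (monoL (-a)) ∈ Cspan := by
      rw [hcomb]
      exact Submodule.add_mem Cspan (Submodule.add_mem Cspan (Submodule.smul_mem Cspan _ E1)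
        (Submodule.smul_mem Cspan _ E2)) (Submodule.smul_mem Cspan _ E3)
    have h12 : ((12 * a : ℤ) : ℂ) ≠ 0 := by
      exact_mod_cast (by omega : (12 * a : ℤ) ≠ 0)
    have := Submodule.smul_mem Cspan (((12 * a : ℤ) : ℂ))⁻¹ hmem
    rwa [inv_smul_smul₀ h12] at this
  · set c : ℤ := (a.natAbs : ℤ) + (b.natAbs : ℤ) + 1 with hc
    have hc0 : c ≠ 0 := by omega
    have hca : c ≠ a := by omega
    have hcb : c ≠ -b := by omega
    have h1 : resPair (monoL a : LaurentSeries ℂ) (monoL (-c) : LaurentSeries ℂ) = 0 := by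
      rw [resPair_monoL ha (by omega), if_neg (by omega)]
    have h2 : resPair (monoL c : LaurentSeries ℂ) (monoL (-c) : LaurentSeries ℂ) = (c : ℂ) := by
      rw [resPair_monoL hc0 (by omega), if_pos (by omega)]
    have h3 : resPair (monoL a : LaurentSeries ℂ) (monoL b : LaurentSeries ℂ) = 0 := by
      rw [resPair_monoL ha hb, if_neg hab]
    have h4 : resPair (monoL c : LaurentSeries ℂ) (monoL b : LaurentSeries ℂ) = 0 := by
      rw [resPair_monoL hc0 hb, if_neg (by omega)]
    have hcomm := TL_comm (monoL a) (monoL c) (monoL b) (monoL (-c))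
    rw [h1, h2, h3, h4, zero_smul, zero_smul, zero_smul, zero_add, add_zero, add_zero] at hcomm
    have hCc : (c : ℂ) ≠ 0 := by exact_mod_cast hc0
    have hmem : (c : ℂ) • TL (monoL a) (monoL b) ∈ Cspan := by
      rw [← hcomm]
      exact Submodule.subset_span ⟨_, TL_mem (monoL a) (monoL c), _,
        TL_mem (monoL b) (monoL (-c)), rfl⟩
    have := Submodule.smul_mem Cspan ((c : ℂ))⁻¹ hmem
    rwa [inv_smul_smul₀ hCc] at this

lemma TL_mem_C (f g : Lprime) : TL f g ∈ Cspan := by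
  have hfg : TL f g = TLbil f g := rfl
  rw [hfg, Lprime_decomp f, Lprime_decomp g]
  simp only [map_sum, map_smul, LinearMap.sum_apply, LinearMap.smul_apply]
  refine Submodule.sum_mem _ (fun i hi => Submodule.smul_mem _ _ ?_)
  refine Submodule.sum_mem _ (fun j hj => Submodule.smul_mem _ _ ?_)
  have hine : (g : LaurentSeries ℂ).coeff i ≠ 0 := by
    simpa [Set.Finite.mem_toFinset, HahnSeries.mem_support] using hi
  have hjne : (f : LaurentSeries ℂ).coeff j ≠ 0 := by
    simpa [Set.Finite.mem_toFinset, HahnSeries.mem_support] using hj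
  have hi0 : i ≠ 0 := fun h => hine (h ▸ g.2.1)
  have hj0 : j ≠ 0 := fun h => hjne (h ▸ f.2.1)
  exact TL_monoL_mem_C hj0 hi0

/-- the span `𝔰` of the operators `T_{f,g}` on `L'` is closed under the
commutator bracket and is perfect: `[𝔰, 𝔰] = 𝔰`, i.e. every element of `𝔰` is a
ℂ-linear combination of commutators of elements of `𝔰`. -/
theorem sFrak_closed_and_perfect :
    (∀ A ∈ sFrak, ∀ B ∈ sFrak, (fun k => A (B k) - B (A k)) ∈ sFrak) ∧
    sFrak = Submodule.span ℂ
      {X : Lprime → Lprime | ∃ A ∈ sFrak, ∃ B ∈ sFrak,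
        X = fun k => A (B k) - B (A k)} := by
  constructor
  · exact fun A hA B hB => comm_mem_sFrak hA hB
  · apply le_antisymm
    · have hs : sFrak = Submodule.span ℂ {A : Lprime → Lprime | ∃ f g : Lprime, A = TL f g} :=
        rfl
      rw [hs]
      refine Submodule.span_le.mpr ?_
      rintro X ⟨f, g, rfl⟩
      exact TL_mem_C f g
    · refine Submodule.span_le.mpr ?_
      rintro X ⟨A, hA, B, hB, rfl⟩
      exact comm_mem_sFrak hA hB
end

section
/- For f, g ∈ ℂ((t)) and m ≥ 0, set c_m(f,g) := (coefficient of t^m in f·π₋(g·t^m)) − (coefficient of t^m in g·π₋(f·t^m)), where π₋ : ℂ((t)) → H₋ is the principal-part projection. Then the function m ↦ c_m(f,g) is finitely supported and its sum equals ⟨f,g⟩ = −Res_{t=0}(f·g'). In other words, the restriction of the canonical two-cocycle ψ of gl(H) to the multiplication operators M_f, M_g on H satisfies ψ(M_f, M_g) = ⟨f,g⟩, so the Heisenberg algebra is the central extension of H' defined by the restriction of ψ. -/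
open HahnSeries

/-- Truncation to strictly negative degrees (the principal part). -/
noncomputable def truncNeg (f : LaurentSeries ℂ) : LaurentSeries ℂ where
  coeff := fun n => if n < 0 then f.coeff n else 0
  isPWO_support' := f.isPWO_support.mono (fun n hn => by
    simp only [Function.mem_support] at hn
    by_cases h : n < 0
    · simp only [h, if_true] at hn
      exact hn
    · simp [h] at hn)

/-- Truncation to strictly positive degrees. -/
noncomputable def truncPos (f : LaurentSeries ℂ) : LaurentSeries ℂ where
  coeff := fun n => if 0 < n then f.coeff n else 0
  isPWO_support' := f.isPWO_support.mono (fun n hn => by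
    simp only [Function.mem_support] at hn
    by_cases h : 0 < n
    · simp only [h, if_true] at hn
      exact hn
    · simp [h] at hn)

lemma truncNeg_coeff (f : LaurentSeries ℂ) (n : ℤ) :
    (truncNeg f).coeff n = if n < 0 then f.coeff n else 0 := rfl

/-- The diagonal matrix coefficient at `t^m` of `M_f ∘ π₋ ∘ M_g − M_g ∘ π₋ ∘ M_f`,
where `M_f` is multiplication by `f`. -/
noncomputable def psiHeis (f g : LaurentSeries ℂ) (m : ℕ) : ℂ :=
  (f * truncNeg (g * HahnSeries.single (m : ℤ) (1 : ℂ))).coeff (m : ℤ) -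
    (g * truncNeg (f * HahnSeries.single (m : ℤ) (1 : ℂ))).coeff (m : ℤ)

private lemma coeff_finsetSum (S : Finset ℤ) (F : ℤ → LaurentSeries ℂ) (n : ℤ) :
    (∑ j ∈ S, F j).coeff n = ∑ j ∈ S, (F j).coeff n := by
  classical
  induction S using Finset.induction with
  | empty => simp
  | insert _ _ h ih => rw [Finset.sum_insert h, Finset.sum_insert h, HahnSeries.coeff_add, ih]

private lemma coeff_sum_single (S : Finset ℤ) (c : ℤ → ℂ) (n : ℤ) :
    (∑ j ∈ S, HahnSeries.single j (c j)).coeff n = if n ∈ S then c n else 0 := by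
  classical
  rw [coeff_finsetSum]
  by_cases hn : n ∈ S
  · rw [if_pos hn, Finset.sum_eq_single n
      (fun j _ hj => HahnSeries.coeff_single_of_ne (Ne.symm hj))
      (fun h => absurd hn h), HahnSeries.coeff_single_same]
  · rw [if_neg hn]
    exact Finset.sum_eq_zero fun j hj =>
      HahnSeries.coeff_single_of_ne (fun h => hn (h ▸ hj))

private lemma mul_trunc_coeff (f x : LaurentSeries ℂ) (S : Finset ℤ)
    (hx : ∀ j, x.coeff j ≠ 0 → j ∈ S) (n : ℤ) :
    (f * x).coeff n = ∑ j ∈ S, f.coeff (n - j) * x.coeff j := by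
  classical
  have hxe : x = ∑ j ∈ S, HahnSeries.single j (x.coeff j) := by
    ext k
    rw [coeff_sum_single]
    by_cases hk : k ∈ S
    · rw [if_pos hk]
    · rw [if_neg hk]
      by_contra h
      exact hk (hx k h)
  calc (f * x).coeff n = (∑ j ∈ S, f * HahnSeries.single j (x.coeff j)).coeff n := by
        rw [← Finset.mul_sum, ← hxe]
    _ = ∑ j ∈ S, (f * HahnSeries.single j (x.coeff j)).coeff n := coeff_finsetSum _ _ _
    _ = ∑ j ∈ S, f.coeff (n - j) * x.coeff j := Finset.sum_congr rfl fun j _ => by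
        have h := HahnSeries.coeff_mul_single_add (r := x.coeff j) (x := f)
          (a := n - j) (b := j)
        rwa [sub_add_cancel] at h

private lemma mul_coeff_eq_zero (f x : LaurentSeries ℂ) (n : ℤ)
    (h : ∀ a b : ℤ, a + b = n → f.coeff a * x.coeff b = 0) : (f * x).coeff n = 0 := by
  rw [HahnSeries.coeff_mul]
  exact Finset.sum_eq_zero fun ij hij =>
    h ij.1 ij.2 (Finset.mem_addAntidiagonal.mp hij).2.2

/-- the diagonal coefficients computing the canonical two-cocycle
`ψ(M_f, M_g) = Tr(π₊M_fπ₋M_gπ₊ − π₊M_gπ₋M_fπ₊)` on multiplication operators are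
finitely supported over the monomial basis `{t^m : m ≥ 0}` of `H₊`, and their sum
equals the residue pairing `⟨f,g⟩ = −Res_{t=0}(f·g')`: the Heisenberg algebra is
the central extension of `H'` defined by the restriction of `ψ`. -/
theorem psi_on_multiplication_operators (f g : LaurentSeries ℂ) :
    (Function.support fun m : ℕ => psiHeis f g m).Finite ∧
    ∑ᶠ m : ℕ, psiHeis f g m = resPair f g := by
  classical
  set N : ℤ := min (min f.order g.order) (-1) with hNdef
  have hN1 : N ≤ -1 := min_le_right _ _
  have hf0 : ∀ n : ℤ, n < N → f.coeff n = 0 := fun n hn =>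
    HahnSeries.coeff_eq_zero_of_lt_order
      (lt_of_lt_of_le hn ((min_le_left _ _).trans (min_le_left _ _)))
  have hg0 : ∀ n : ℤ, n < N → g.coeff n = 0 := fun n hn =>
    HahnSeries.coeff_eq_zero_of_lt_order
      (lt_of_lt_of_le hn ((min_le_left _ _).trans (min_le_right _ _)))
  set h : ℤ → ℂ := fun i => f.coeff (-i) * g.coeff i - g.coeff (-i) * f.coeff i with hh
  have hlow : ∀ i : ℤ, i < N → h i = 0 := fun i hi => by
    simp [hh, hf0 i hi, hg0 i hi]
  -- formula for psiHeis
  have key : ∀ (u v : LaurentSeries ℂ), (∀ n : ℤ, n < N → v.coeff n = 0) → ∀ m : ℕ,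
      (u * truncNeg (v * HahnSeries.single (m : ℤ) 1)).coeff (m : ℤ)
        = ∑ j ∈ Finset.Icc N (-1), u.coeff ((m : ℤ) - j) * v.coeff (j - m) := by
    intro u v hv m
    have hcoeff : ∀ n : ℤ, (v * HahnSeries.single (m : ℤ) (1 : ℂ)).coeff n
        = v.coeff (n - m) := by
      intro n
      have h2 := HahnSeries.coeff_mul_single_add (r := (1 : ℂ)) (x := v)
        (a := n - (m : ℤ)) (b := (m : ℤ))
      rwa [sub_add_cancel, mul_one] at h2
    rw [mul_trunc_coeff u _ (Finset.Icc N (-1)) ?_]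
    · refine Finset.sum_congr rfl fun j hj => ?_
      rw [Finset.mem_Icc] at hj
      rw [truncNeg_coeff, hcoeff, if_pos (by omega)]
    · intro j hj
      rw [truncNeg_coeff] at hj
      by_cases hjneg : j < 0
      · rw [if_pos hjneg, hcoeff] at hj
        have hjN : N ≤ j - m := not_lt.mp fun hc => hj (hv _ hc)
        have hm0 : (0 : ℤ) ≤ (m : ℤ) := Int.natCast_nonneg m
        exact Finset.mem_Icc.mpr ⟨by omega, by omega⟩
      · rw [if_neg hjneg] at hj
        exact absurd rfl hj
  have hpsi : ∀ m : ℕ, psiHeis f g m = ∑ j ∈ Finset.Icc N (-1), h (j - (m : ℤ)) := by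
    intro m
    rw [psiHeis, key f g hg0 m, key g f hf0 m, ← Finset.sum_sub_distrib]
    refine Finset.sum_congr rfl fun j _ => ?_
    simp only [hh]
    rw [show (m : ℤ) - j = -(j - (m : ℤ)) by ring]
  set M : ℕ := (-N).toNat with hMdef
  have hM : (M : ℤ) = -N := Int.toNat_of_nonneg (by omega)
  have hvanish : ∀ m : ℕ, M ≤ m → psiHeis f g m = 0 := by
    intro m hm
    have hm' : (M : ℤ) ≤ (m : ℤ) := Int.ofNat_le.mpr hm
    rw [hpsi]
    refine Finset.sum_eq_zero fun j hj => ?_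
    rw [Finset.mem_Icc] at hj
    exact hlow _ (by omega)
  have hsupp : (Function.support fun m : ℕ => psiHeis f g m) ⊆ ↑(Finset.range M) := by
    intro m hm
    simp only [Finset.coe_range, Set.mem_Iio]
    by_contra hc
    exact hm (hvanish m (not_lt.mp hc))
  refine ⟨Set.Finite.subset (Finset.range M).finite_toSet hsupp, ?_⟩
  rw [finsum_eq_sum_of_support_subset _ hsupp]
  -- LHS computation
  have hstep : ∀ m : ℕ, ∑ j ∈ Finset.Icc N (-1), h (j - (m : ℤ))
      = ∑ i ∈ Finset.Icc N (-1), (if (m : ℤ) < -i then h i else 0) := by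
    intro m
    have e1 : ∑ j ∈ Finset.Icc N (-1), h (j - (m : ℤ))
        = ∑ i ∈ Finset.Icc (N - m) (-1 - m), h i := by
      have : Finset.Icc N (-1 : ℤ)
          = (Finset.Icc (N - m) (-1 - m)).map (addRightEmbedding (m : ℤ)) := by
        rw [Finset.map_add_right_Icc, sub_add_cancel, sub_add_cancel]
      rw [this, Finset.sum_map]
      refine Finset.sum_congr rfl fun i _ => ?_
      simp [addRightEmbedding]
    have e2 : ∑ i ∈ Finset.Icc (N - m) (-1 - m), h i
        = ∑ i ∈ Finset.Icc N (-1 - m), h i := by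
      refine (Finset.sum_subset (Finset.Icc_subset_Icc (by omega) le_rfl)
        fun i hi hni => ?_).symm
      rw [Finset.mem_Icc] at hi
      simp only [Finset.mem_Icc, not_and, not_le] at hni
      exact hlow i (by omega)
    have e3 : Finset.filter (fun i => (m : ℤ) < -i) (Finset.Icc N (-1))
        = Finset.Icc N (-1 - m) := by
      ext i
      simp only [Finset.mem_filter, Finset.mem_Icc]
      omega
    rw [e1, e2, ← e3, Finset.sum_filter]
  have hsum1 : ∑ m ∈ Finset.range M, psiHeis f g m
      = ∑ i ∈ Finset.Icc N (-1), ((-i : ℤ) : ℂ) * h i := by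
    calc ∑ m ∈ Finset.range M, psiHeis f g m
        = ∑ m ∈ Finset.range M, ∑ i ∈ Finset.Icc N (-1),
            (if (m : ℤ) < -i then h i else 0) := by
          refine Finset.sum_congr rfl fun m _ => ?_
          rw [hpsi m, hstep m]
      _ = ∑ i ∈ Finset.Icc N (-1), ∑ m ∈ Finset.range M,
            (if (m : ℤ) < -i then h i else 0) := Finset.sum_comm
      _ = ∑ i ∈ Finset.Icc N (-1), ((-i : ℤ) : ℂ) * h i := by
          refine Finset.sum_congr rfl fun i hi => ?_
          rw [Finset.mem_Icc] at hi
          have hfil : Finset.filter (fun m : ℕ => (m : ℤ) < -i) (Finset.range M)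
              = Finset.range (-i).toNat := by
            ext m
            simp only [Finset.mem_filter, Finset.mem_range]
            omega
          rw [← Finset.sum_filter, hfil, Finset.sum_const, Finset.card_range,
            nsmul_eq_mul]
          congr 1
          have : (((-i).toNat : ℤ) : ℂ) = ((-i : ℤ) : ℂ) := by
            rw [Int.toNat_of_nonneg (by omega)]
          exact_mod_cast this
  rw [hsum1]
  -- RHS computation
  have hDg : ∀ n : ℤ, (D g).coeff n = ((n + 1 : ℤ) : ℂ) * g.coeff (n + 1) := fun _ => rfl
  have hDg0 : ∀ n : ℤ, n < N - 1 → (D g).coeff n = 0 := by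
    intro n hn
    rw [hDg, hg0 (n + 1) (by omega), mul_zero]
  set S : Finset ℤ := Finset.Icc (N - 1) (-N) with hS
  set T : LaurentSeries ℂ := ∑ j ∈ S, HahnSeries.single j ((D g).coeff j) with hT
  have hTcoeff : ∀ n : ℤ, T.coeff n = if n ∈ S then (D g).coeff n else 0 := fun n =>
    coeff_sum_single S _ n
  have hsplit : (f * D g).coeff (-1) = (f * T).coeff (-1) := by
    have hzero : (f * (D g - T)).coeff (-1) = 0 := by
      refine mul_coeff_eq_zero _ _ _ fun a b hab => ?_
      by_cases hb : b ∈ S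
      · rw [show (D g - T).coeff b = 0 by
          rw [HahnSeries.coeff_sub, hTcoeff, if_pos hb, sub_self], mul_zero]
      · have hb2 : ¬ (N - 1 ≤ b ∧ b ≤ -N) := by
          simpa [hS, Finset.mem_Icc] using hb
        rcases lt_or_ge b (N - 1) with hb' | hb'
        · rw [show (D g - T).coeff b = 0 by
            rw [HahnSeries.coeff_sub, hTcoeff, if_neg hb, hDg0 b hb', sub_zero], mul_zero]
        · rw [hf0 a (by omega), zero_mul]
    have e : f * D g = f * T + f * (D g - T) := by ring
    rw [e, HahnSeries.coeff_add, hzero, add_zero]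
  have hres : (f * D g).coeff (-1)
      = ∑ i ∈ Finset.Icc N (-N + 1), ((i : ℤ) : ℂ) * (f.coeff (-i) * g.coeff i) := by
    rw [hsplit, mul_trunc_coeff f T S (fun j hj => by
      by_contra hjS
      rw [hTcoeff, if_neg hjS] at hj
      exact hj rfl)]
    have hmap : S = (Finset.Icc N (-N + 1)).map (addRightEmbedding (-1 : ℤ)) := by
      rw [Finset.map_add_right_Icc, hS]
      congr 1 <;> ring
    rw [hmap, Finset.sum_map]
    refine Finset.sum_congr rfl fun i hi => ?_
    rw [Finset.mem_Icc] at hi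
    have hmem : i + (-1) ∈ S := by
      rw [hS, Finset.mem_Icc]; omega
    simp only [addRightEmbedding, Function.Embedding.coeFn_mk]
    rw [hTcoeff, if_pos hmem, hDg]
    rw [show (-1 : ℤ) - (i + -1) = -i by ring, show i + -1 + 1 = i by ring]
    ring
  rw [resPair, hres]
  -- final algebra
  set A : ℤ → ℂ := fun i => ((-i : ℤ) : ℂ) * (f.coeff (-i) * g.coeff i) with hA
  have hLHS : ∑ i ∈ Finset.Icc N (-1), ((-i : ℤ) : ℂ) * h i
      = ∑ i ∈ Finset.Icc N (-1), A i
        + ∑ i ∈ Finset.Icc (1 : ℤ) (-N), A i := by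
    have e1 : ∑ i ∈ Finset.Icc N (-1), ((-i : ℤ) : ℂ) * h i
        = ∑ i ∈ Finset.Icc N (-1), A i
          - ∑ i ∈ Finset.Icc N (-1), ((-i : ℤ) : ℂ) * (g.coeff (-i) * f.coeff i) := by
      rw [← Finset.sum_sub_distrib]
      refine Finset.sum_congr rfl fun i _ => ?_
      simp only [hh, hA]
      ring
    have e2 : ∑ i ∈ Finset.Icc N (-1), ((-i : ℤ) : ℂ) * (g.coeff (-i) * f.coeff i)
        = ∑ i ∈ Finset.Icc (1 : ℤ) (-N), (-(A i)) := by
      refine Finset.sum_nbij' (fun i => -i) (fun i => -i) ?_ ?_ ?_ ?_ ?_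
      · intro a ha; rw [Finset.mem_Icc] at ha ⊢; omega
      · intro a ha; rw [Finset.mem_Icc] at ha ⊢; omega
      · intro a _; ring
      · intro a _; ring
      · intro a _
        simp only [hA]
        push_cast
        ring_nf
    rw [e1, e2, Finset.sum_neg_distrib, sub_neg_eq_add]
  rw [hLHS]
  have e3 : ∑ i ∈ Finset.Icc (1 : ℤ) (-N), A i
      = ∑ i ∈ Finset.Icc (0 : ℤ) (-N + 1), A i := by
    refine Finset.sum_subset (Finset.Icc_subset_Icc (by omega) (by omega))
      fun i hi hni => ?_
    rw [Finset.mem_Icc] at hi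
    simp only [Finset.mem_Icc, not_and, not_le] at hni
    rcases eq_or_ne i 0 with rfl | hi0
    · simp [hA]
    · have hz : f.coeff (-i) = 0 := hf0 _ (by omega)
      simp only [hA, hz, zero_mul, mul_zero]
  rw [e3]
  have e4 : ∑ i ∈ Finset.Icc N (-1), A i + ∑ i ∈ Finset.Icc (0 : ℤ) (-N + 1), A i
      = ∑ i ∈ Finset.Icc N (-N + 1), A i := by
    have h1 : Finset.Icc N (-1 : ℤ) = Finset.Ico N 0 := by
      ext i; simp only [Finset.mem_Icc, Finset.mem_Ico]; omega
    have h2 : Finset.Icc (0 : ℤ) (-N + 1) = Finset.Ico (0 : ℤ) (-N + 2) := by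
      ext i; simp only [Finset.mem_Icc, Finset.mem_Ico]; omega
    have h3 : Finset.Icc N (-N + 1) = Finset.Ico N (-N + 2) := by
      ext i; simp only [Finset.mem_Icc, Finset.mem_Ico]; omega
    rw [h1, h2, h3, ← Finset.sum_union (Finset.Ico_disjoint_Ico_consecutive N 0 (-N + 2)),
      Finset.Ico_union_Ico_eq_Ico (by omega) (by omega)]
  rw [e4, ← Finset.sum_neg_distrib]
  refine Finset.sum_congr rfl fun i _ => ?_
  simp only [hA]
  push_cast
  ring
end
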